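/- arXiv:math/0611200 — 8 statements merged into one kernel-verified Lean document; each statement's English description precedes it below -/
import Mathlib

section
/- Let A be an associative algebra and define on A the bracket [x,y] = xy − yx, making A a Lie algebra. If r : ℂ × ℂ → End(A) satisfies the associative Yang-Baxter equation (r(u,w)x)(r(u,v)y) − r(u,v)((r(v,w)x)y) − r(u,w)(x(r(w,v)y)) = 0 for all u,v,w ∈ ℂ and x,y ∈ A, then r also satisfies the classical (Lie) Yang-Baxter equation [r(u,w)x, r(u,v)y] − r(u,v)[r(v,w)x, y] − r(u,w)[x, r(w,v)y] = 0 for all u,v,w and x,y. -/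
/-- A solution of the associative Yang–Baxter equation is a solution of the
classical (Lie) Yang–Baxter equation for the commutator bracket `[x,y] = xy - yx`. -/
theorem stmt2 {A : Type*} [NonUnitalRing A] [Module ℂ A]
    (r : ℂ → ℂ → A →ₗ[ℂ] A)
    (h : ∀ (u v w : ℂ) (x y : A),
      r u w x * r u v y - r u v (r v w x * y) - r u w (x * r w v y) = 0) :
    ∀ (u v w : ℂ) (x y : A),
      (r u w x * r u v y - r u v y * r u w x)
        - r u v (r v w x * y - y * r v w x)
        - r u w (x * r w v y - r w v y * x) = 0 := by
  intro u v w x y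
  have h1 := h u v w x y
  have h2 := h u w v y x
  have key : (r u w x * r u v y - r u v y * r u w x)
        - r u v (r v w x * y - y * r v w x)
        - r u w (x * r w v y - r w v y * x)
      = (r u w x * r u v y - r u v (r v w x * y) - r u w (x * r w v y))
        - (r u v y * r u w x - r u w (r w v y * x) - r u v (y * r v w x)) := by
    simp only [map_sub]; abel
  rw [key, h1, h2, sub_zero]
end

section
/- Let A = ℂ^p with coordinatewise multiplication and idempotent basis e_1, ..., e_p (so e_i e_j = δ_{ij} e_i). Let φ_1, ..., φ_p, ψ_1, ..., ψ_p : ℂ → ℂ be functions with φ_1, ..., φ_p nonconstant. Then the operator r(u,v) defined by r(u,v)e_i = Σ_{j=1}^p (ψ_i(v)/(φ_j(u) − φ_i(v))) e_j satisfies the associative Yang-Baxter equation (r(u,w)x)(r(u,v)y) − r(u,v)((r(v,w)x)y) − r(u,w)(x(r(w,v)y)) = 0, for all u,v,w in ℂ where the expression is defined (i.e. no denominator vanishes). -/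
open Finset

/-- The operator `r(u,v)` on `ℂ^p` with `r(u,v)e_i = Σ_j (ψ_i(v)/(φ_j(u) − φ_i(v))) e_j`,
written in coordinates. -/
noncomputable def rop3 {p : ℕ} (φ ψ : Fin p → ℂ → ℂ) (a b : ℂ)
    (x : Fin p → ℂ) : Fin p → ℂ :=
  fun j => ∑ i, ψ i b / (φ j a - φ i b) * x i

/-- The operator `rop3` satisfies the associative Yang–Baxter equation on `A = ℂ^p`
at all parameter triples where no denominator vanishes. -/
theorem stmt3 {p : ℕ} (φ ψ : Fin p → ℂ → ℂ)
    (hφ : ∀ i, ∃ a b, φ i a ≠ φ i b)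
    (u v w : ℂ)
    (h1 : ∀ i j, φ j u ≠ φ i v) (h2 : ∀ i j, φ j v ≠ φ i w)
    (h3 : ∀ i j, φ j u ≠ φ i w) (h4 : ∀ i j, φ j w ≠ φ i v) :
    ∀ x y : Fin p → ℂ,
      rop3 φ ψ u w x * rop3 φ ψ u v y
        - rop3 φ ψ u v (rop3 φ ψ v w x * y)
        - rop3 φ ψ u w (x * rop3 φ ψ w v y) = 0 := by
  intro x y
  funext j
  simp only [rop3, Pi.mul_apply, Pi.sub_apply, Pi.zero_apply]
  rw [Finset.sum_mul_sum]
  have e2 : (∑ k, ψ k v / (φ j u - φ k v) *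
        ((∑ i, ψ i w / (φ k v - φ i w) * x i) * y k))
      = ∑ i, ∑ k, ψ k v / (φ j u - φ k v) *
        (ψ i w / (φ k v - φ i w) * x i) * y k := by
    rw [Finset.sum_comm]
    refine Finset.sum_congr rfl fun k _ => ?_
    simp only [Finset.sum_mul, Finset.mul_sum, mul_assoc]
  have e3 : (∑ i, ψ i w / (φ j u - φ i w) *
        (x i * ∑ k, ψ k v / (φ i w - φ k v) * y k))
      = ∑ i, ∑ k, ψ i w / (φ j u - φ i w) *
        (x i * (ψ k v / (φ i w - φ k v) * y k)) := by
    refine Finset.sum_congr rfl fun i _ => ?_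
    rw [Finset.mul_sum, Finset.mul_sum]
  rw [e2, e3, ← Finset.sum_sub_distrib, ← Finset.sum_sub_distrib]
  refine Finset.sum_eq_zero fun i _ => ?_
  rw [← Finset.sum_sub_distrib, ← Finset.sum_sub_distrib]
  refine Finset.sum_eq_zero fun k _ => ?_
  have d1 := sub_ne_zero_of_ne (h3 i j)
  have d2 := sub_ne_zero_of_ne (h1 k j)
  have d3 := sub_ne_zero_of_ne (h2 i k)
  have d4 := sub_ne_zero_of_ne (h4 k i)
  field_simp
  ring
end

section
/- Let 𝔤 be a Lie algebra with two compatible brackets [·,·] and [·,·]₁, i.e. [·,·] + λ[·,·]₁ is a Lie bracket for all λ. Suppose S : ℂ → End(𝔤) is a function defined on a set U ⊆ ℂ, with each S_λ invertible, satisfying [S_λ(x), S_λ(y)] = S_λ([x,y] + λ[x,y]₁) for all x,y ∈ 𝔤 and λ ∈ U. Then r(u,v) = (1/(u−v)) S_u ∘ S_v^{-1} satisfies the classical Yang-Baxter equation [r(u,w)x, r(u,v)y] − r(u,v)[r(v,w)x, y] − r(u,w)[x, r(w,v)y] = 0 for all distinct u,v,w ∈ U and x,y ∈ 𝔤. -/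
/-- Given compatible Lie brackets `⁅·,·⁆` and `B` with intertwining operators `S_λ`
(`[S_λ x, S_λ y] = S_λ([x,y] + λ B x y)` for `λ ∈ U`, each `S_λ` invertible),
the operator `r(u,v) = (u−v)⁻¹ S_u S_v⁻¹` satisfies the classical Yang–Baxter equation. -/
theorem stmt4 {L : Type*} [LieRing L] [LieAlgebra ℂ L]
    (B : L →ₗ[ℂ] L →ₗ[ℂ] L)
    (hBalt : ∀ x, B x x = 0)
    (hcompat : ∀ (lam : ℂ) (C : L → L → L),
      (∀ x y, C x y = ⁅x, y⁆ + lam • B x y) →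
      ∀ x y z, C (C x y) z + C (C y z) x + C (C z x) y = 0)
    (U : Set ℂ) (S : ℂ → (L ≃ₗ[ℂ] L))
    (hS : ∀ lam ∈ U, ∀ x y : L, ⁅S lam x, S lam y⁆ = S lam (⁅x, y⁆ + lam • B x y)) :
    ∀ u ∈ U, ∀ v ∈ U, ∀ w ∈ U, u ≠ v → u ≠ w → v ≠ w →
      ∀ r : ℂ → ℂ → L → L,
        (∀ a b z, r a b z = (a - b)⁻¹ • S a ((S b).symm z)) →
        ∀ x y : L,
          ⁅r u w x, r u v y⁆ - r u v ⁅r v w x, y⁆ - r u w ⁅x, r w v y⁆ = 0 := by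
  intro u hu v hv w hw huv huw hvw r hr x y
  have huv' : u - v ≠ 0 := sub_ne_zero.mpr huv
  have huw' : u - w ≠ 0 := sub_ne_zero.mpr huw
  have hvw' : v - w ≠ 0 := sub_ne_zero.mpr hvw
  have hwv' : w - v ≠ 0 := sub_ne_zero.mpr hvw.symm
  set p := (S w).symm x with hp
  set q := (S v).symm y with hq
  have hx : x = S w p := ((S w).apply_symm_apply x).symm
  have hy : y = S v q := ((S v).apply_symm_apply y).symm
  have h1 : ⁅r u w x, r u v y⁆
      = (u - w)⁻¹ • (u - v)⁻¹ • S u (⁅p, q⁆ + u • B p q) := by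
    rw [hr, hr, ← hp, ← hq, smul_lie, lie_smul, hS u hu]
  have h2 : r u v ⁅r v w x, y⁆
      = (u - v)⁻¹ • (v - w)⁻¹ • S u (⁅p, q⁆ + v • B p q) := by
    rw [hr, hr, ← hp]
    conv_lhs => rw [hy]
    rw [smul_lie, hS v hv, map_smul, (S v).symm_apply_apply, map_smul]
  have h3 : r u w ⁅x, r w v y⁆
      = (u - w)⁻¹ • (w - v)⁻¹ • S u (⁅p, q⁆ + w • B p q) := by
    rw [hr, hr, ← hq]
    conv_lhs => rw [hx]
    rw [lie_smul, hS w hw, map_smul, (S w).symm_apply_apply, map_smul]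
  rw [h1, h2, h3]
  simp only [map_add, map_smul, smul_add, smul_smul]
  match_scalars <;> field_simp <;> ring
end

section
/- Let A be an associative algebra with two compatible associative products x·y and x∘y. Suppose S : U → End(A) (U ⊆ ℂ) with each S_λ invertible and satisfying S_λ(x)·S_λ(y) = S_λ(x·y + λ x∘y) for all x,y ∈ A, λ ∈ U. Then r(u,v) = (1/(u−v)) S_u ∘ S_v^{-1} satisfies the associative Yang-Baxter equation (r(u,w)x)·(r(u,v)y) − r(u,v)((r(v,w)x)·y) − r(u,w)(x·(r(w,v)y)) = 0 for all distinct u,v,w ∈ U and x,y ∈ A. -/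
/-- Given compatible associative products `·` and `m` with intertwining operators `S_λ`
(`S_λ x · S_λ y = S_λ(x·y + λ m x y)` for `λ ∈ U`, each `S_λ` invertible),
the operator `r(u,v) = (u−v)⁻¹ S_u S_v⁻¹` satisfies the associative Yang–Baxter equation. -/
theorem stmt5 {A : Type*} [Ring A] [Algebra ℂ A]
    (m : A →ₗ[ℂ] A →ₗ[ℂ] A)
    (hcompat : ∀ (lam : ℂ) (P : A → A → A),
      (∀ x y, P x y = x * y + lam • m x y) →
      ∀ x y z, P (P x y) z = P x (P y z))
    (U : Set ℂ) (S : ℂ → (A ≃ₗ[ℂ] A))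
    (hS : ∀ lam ∈ U, ∀ x y : A, S lam x * S lam y = S lam (x * y + lam • m x y)) :
    ∀ u ∈ U, ∀ v ∈ U, ∀ w ∈ U, u ≠ v → u ≠ w → v ≠ w →
      ∀ r : ℂ → ℂ → A → A,
        (∀ a b z, r a b z = (a - b)⁻¹ • S a ((S b).symm z)) →
        ∀ x y : A,
          r u w x * r u v y - r u v (r v w x * y) - r u w (x * r w v y) = 0 := by
  intro u hu v hv w hw huv huw hvw r hr x y
  set x' := (S w).symm x with hx'
  set y' := (S v).symm y with hy'
  have hxx : x = S w x' := ((S w).apply_symm_apply x).symm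
  have hyy : y = S v y' := ((S v).apply_symm_apply y).symm
  set p := x' * y' with hp
  set q := m x' y' with hq
  have h1 : r u w x * r u v y = ((u - w)⁻¹ * (u - v)⁻¹) • S u (p + u • q) := by
    rw [hr, hr, ← hx', ← hy', smul_mul_smul_comm, hS u hu]
  have h2 : r u v (r v w x * y) = ((u - v)⁻¹ * (v - w)⁻¹) • S u (p + v • q) := by
    rw [hr, hr, ← hx', hyy, smul_mul_assoc, hS v hv, map_smul, map_smul,
      (S v).symm_apply_apply, smul_smul]
  have h3 : r u w (x * r w v y) = ((u - w)⁻¹ * (w - v)⁻¹) • S u (p + w • q) := by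
    rw [hr, hr, hxx]
    have hy2 : (S v).symm y = y' := rfl
    rw [hy2, mul_smul_comm, hS w hw, map_smul, map_smul,
      (S w).symm_apply_apply, smul_smul]
  rw [h1, h2, h3, ← (S u).map_smul ((u - w)⁻¹ * (u - v)⁻¹), ← (S u).map_smul,
    ← (S u).map_smul, ← map_sub, ← map_sub]
  have huv' : u - v ≠ 0 := sub_ne_zero.2 huv
  have huw' : u - w ≠ 0 := sub_ne_zero.2 huw
  have hvw' : v - w ≠ 0 := sub_ne_zero.2 hvw
  have hwv' : w - v ≠ 0 := sub_ne_zero.2 (Ne.symm hvw)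
  have hA : (u - w)⁻¹ * (u - v)⁻¹ - (u - v)⁻¹ * (v - w)⁻¹ - (u - w)⁻¹ * (w - v)⁻¹ = 0 := by
    field_simp
    ring
  have hB : ((u - w)⁻¹ * (u - v)⁻¹) * u - ((u - v)⁻¹ * (v - w)⁻¹) * v
      - ((u - w)⁻¹ * (w - v)⁻¹) * w = 0 := by
    field_simp
    ring
  have key : ((u - w)⁻¹ * (u - v)⁻¹) • (p + u • q) - ((u - v)⁻¹ * (v - w)⁻¹) • (p + v • q)
      - ((u - w)⁻¹ * (w - v)⁻¹) • (p + w • q)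
      = ((u - w)⁻¹ * (u - v)⁻¹ - (u - v)⁻¹ * (v - w)⁻¹ - (u - w)⁻¹ * (w - v)⁻¹) • p
        + (((u - w)⁻¹ * (u - v)⁻¹) * u - ((u - v)⁻¹ * (v - w)⁻¹) * v
          - ((u - w)⁻¹ * (w - v)⁻¹) * w) • q := by
    simp only [smul_add, smul_smul, sub_smul, add_smul]
    abel
  rw [key, hA, hB]
  simp
end

section
/- Let A = Mat_N(ℂ) and let a ∈ A. For u,v,w ∈ ℂ pairwise distinct and such that u+a, v+a, w+a are invertible, the operator r(u,v) ∈ End(A) defined by r(u,v)x = (1/(u−v))x + (v+a)^{-1}x satisfies the associative Yang-Baxter equation (r(u,w)x)(r(u,v)y) − r(u,v)((r(v,w)x)y) − r(u,w)(x(r(w,v)y)) = 0 for all x,y ∈ A. -/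
/-- For `A = Mat_N(ℂ)` and `a ∈ A`, the operator `r(u,v)x = (u−v)⁻¹ x + (v+a)⁻¹ x`
satisfies the associative Yang–Baxter equation at pairwise distinct parameters where
`u+a`, `v+a`, `w+a` are invertible. -/
theorem stmt9 {N : ℕ} (a : Matrix (Fin N) (Fin N) ℂ) (u v w : ℂ)
    (huv : u ≠ v) (huw : u ≠ w) (hvw : v ≠ w)
    (hu : IsUnit (u • (1 : Matrix (Fin N) (Fin N) ℂ) + a))
    (hv : IsUnit (v • (1 : Matrix (Fin N) (Fin N) ℂ) + a))
    (hw : IsUnit (w • (1 : Matrix (Fin N) (Fin N) ℂ) + a)) :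
    ∀ r : ℂ → ℂ → Matrix (Fin N) (Fin N) ℂ → Matrix (Fin N) (Fin N) ℂ,
      (∀ b c x, r b c x = (b - c)⁻¹ • x + (c • (1 : Matrix (Fin N) (Fin N) ℂ) + a)⁻¹ * x) →
      ∀ x y : Matrix (Fin N) (Fin N) ℂ,
        r u w x * r u v y - r u v (r v w x * y) - r u w (x * r w v y) = 0 := by
  intro r hr x y
  set B := (v • (1 : Matrix (Fin N) (Fin N) ℂ) + a)⁻¹ with hBdef
  set C := (w • (1 : Matrix (Fin N) (Fin N) ℂ) + a)⁻¹ with hCdef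
  have hBv : B * (v • (1 : Matrix (Fin N) (Fin N) ℂ) + a) = 1 :=
    Matrix.nonsing_inv_mul _ ((Matrix.isUnit_iff_isUnit_det _).mp hv)
  have hwC : (w • (1 : Matrix (Fin N) (Fin N) ℂ) + a) * C = 1 :=
    Matrix.mul_nonsing_inv _ ((Matrix.isUnit_iff_isUnit_det _).mp hw)
  have hwv : w - v ≠ 0 := sub_ne_zero.mpr (Ne.symm hvw)
  have hkey : B - C = (w - v) • (B * C) := by
    have : B - C = B * ((w • (1 : Matrix (Fin N) (Fin N) ℂ) + a)
        - (v • (1 : Matrix (Fin N) (Fin N) ℂ) + a)) * C := by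
      rw [mul_sub, sub_mul, mul_assoc, hwC, mul_one, hBv, one_mul]
    rw [this]
    have h2 : (w • (1 : Matrix (Fin N) (Fin N) ℂ) + a)
        - (v • (1 : Matrix (Fin N) (Fin N) ℂ) + a) = (w - v) • 1 := by
      rw [sub_smul]; abel
    rw [h2, Matrix.mul_smul, Matrix.smul_mul, mul_one]
  have hBC : ∀ z : Matrix (Fin N) (Fin N) ℂ,
      B * (C * z) = (w - v)⁻¹ • (B * z) - (w - v)⁻¹ • (C * z) := by
    intro z
    have h3 : (w - v)⁻¹ • ((B - C) * z) = B * (C * z) := by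
      rw [hkey, Matrix.smul_mul, smul_smul, inv_mul_cancel₀ hwv, one_smul, mul_assoc]
    rw [← h3, sub_mul, smul_sub]
  simp only [hr, mul_add, add_mul, sub_mul, mul_sub, Matrix.smul_mul, Matrix.mul_smul,
    smul_add, smul_sub, mul_assoc, smul_smul, ← hBdef, ← hCdef, hBC]
  have h1 : u - v ≠ 0 := sub_ne_zero.mpr huv
  have h2 : u - w ≠ 0 := sub_ne_zero.mpr huw
  have h3 : v - w ≠ 0 := sub_ne_zero.mpr hvw
  have h4 : w - v ≠ 0 := hwv
  match_scalars <;> field_simp <;> ring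
end

section
/- Fix k ≥ 2 and indices in ℤ/kℤ. Let U be the unital associative ℂ-algebra generated by e_1,...,e_k, f_1,...,f_k with relations e_i e_j = δ_{ij} e_i, f_i f_j = δ_{ij} f_i, e_1 + ... + e_k = 1, f_1 + ... + f_k = 1, and f_i e_j = 0 whenever j − i ∉ {0,1} (mod k). Fix t ∈ ℂ with t^k ≠ 1. Then there is a representation of U on V = ℂ^k defined as follows: let w_1,...,w_k be the standard basis, set v_i = w_i − t w_{i−1} (indices mod k), let e_i act as the projection onto ℂv_i along the span of the other v_j, and f_i act as the projection onto ℂw_i along the other w_j. With this action all the defining relations of U hold; in particular f_i e_j = 0 for j − i ∉ {0,1} mod k. -/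
open Finset

section Aux

variable (k : ℕ) [NeZero k] (t : ℂ)

/-- explicit formula for `v j`. -/
noncomputable def vdef13 (j : ZMod k) : ZMod k → ℂ :=
  (Pi.single j 1 : ZMod k → ℂ) - t • (Pi.single (j - 1) 1 : ZMod k → ℂ)

/-- the coordinate functional of the basis `v`. -/
noncomputable def phi13 (j : ZMod k) : (ZMod k → ℂ) →ₗ[ℂ] ℂ where
  toFun x := (1 - t ^ k)⁻¹ * ∑ i, t ^ (i - j).val * x i
  map_add' x y := by
    simp only [Pi.add_apply, mul_add, Finset.sum_add_distrib]
  map_smul' c x := by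
    simp only [Pi.smul_apply, smul_eq_mul, RingHom.id_apply]
    rw [show (∑ i, t ^ (i - j).val * (c * x i)) = c * ∑ i, t ^ (i - j).val * x i by
      rw [Finset.mul_sum]; congr 1; ext i; ring]
    ring

noncomputable def e13 (j : ZMod k) : (ZMod k → ℂ) →ₗ[ℂ] (ZMod k → ℂ) :=
  (LinearMap.toSpanSingleton ℂ (ZMod k → ℂ) (vdef13 k t j)).comp (phi13 k t j)

lemma e13_apply (j : ZMod k) (x : ZMod k → ℂ) :
    e13 k t j x = phi13 k t j x • vdef13 k t j := rfl

noncomputable def f13 (i : ZMod k) : (ZMod k → ℂ) →ₗ[ℂ] (ZMod k → ℂ) :=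
  (LinearMap.single ℂ (fun _ : ZMod k => ℂ) i).comp (LinearMap.proj i)

lemma f13_apply (i : ZMod k) (x : ZMod k → ℂ) :
    f13 k i x = Pi.single i (x i) := rfl

lemma val_neg_one13 (hk : 2 ≤ k) : ((-1 : ZMod k)).val = k - 1 := by
  have h : ((-1 : ZMod k)) = ((k - 1 : ℕ) : ZMod k) := by
    push_cast [Nat.cast_sub (by omega : 1 ≤ k)]
    simp [ZMod.natCast_self]
  rw [h, ZMod.val_cast_of_lt (by omega)]

lemma key13 (hk : 2 ≤ k) (d : ZMod k) :
    t ^ d.val - t * t ^ (d - 1).val = if d = 0 then 1 - t ^ k else 0 := by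
  by_cases hd : d = 0
  · subst hd
    simp only [if_pos rfl, ZMod.val_zero, pow_zero, zero_sub, val_neg_one13 k hk]
    rw [← pow_succ']
    congr 2
    omega
  · rw [if_neg hd]
    have h1 : 1 ≤ d.val := Nat.pos_of_ne_zero (fun h => hd ((ZMod.val_eq_zero d).mp h))
    have hlt : d.val < k := d.val_lt
    have hd0 : ((d.val : ℕ) : ZMod k) = d := by simp [ZMod.natCast_val, ZMod.cast_id]
    have hd1 : (d - 1 : ZMod k) = ((d.val - 1 : ℕ) : ZMod k) := by
      push_cast [Nat.cast_sub h1]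
      rw [hd0]
    have hp : t ^ d.val = t * t ^ (d.val - 1) := by
      rw [← pow_succ']
      congr 1
      omega
    rw [hd1, ZMod.val_cast_of_lt (by omega), hp]
    ring

lemma phi_v13 (hk : 2 ≤ k) (ht : t ^ k ≠ 1) (i j : ZMod k) :
    phi13 k t i (vdef13 k t j) = if i = j then 1 else 0 := by
  have hne : (1 : ℂ) - t ^ k ≠ 0 := sub_ne_zero.mpr (Ne.symm ht)
  show (1 - t ^ k)⁻¹ * ∑ m, t ^ (m - i).val * (vdef13 k t j m) = _
  have hsum : ∑ m, t ^ (m - i).val * (vdef13 k t j m)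
      = t ^ (j - i).val - t * t ^ ((j - i) - 1).val := by
    simp only [vdef13, Pi.sub_apply, Pi.smul_apply, Pi.single_apply, smul_eq_mul, mul_sub]
    rw [Finset.sum_sub_distrib]
    have h2 : (j - 1 - i : ZMod k) = (j - i) - 1 := by ring
    congr 1
    · rw [Finset.sum_eq_single j]
      · simp
      · intro m _ hm; simp [hm]
      · simp
    · rw [Finset.sum_eq_single (j - 1)]
      · simp [h2]; ring
      · intro m _ hm; simp [hm]
      · simp
  rw [hsum, key13 k t hk (j - i)]
  by_cases h : i = j
  · rw [if_pos h, if_pos (by rw [h]; ring)]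
    field_simp
  · rw [if_neg h, if_neg (fun hc => h (sub_eq_zero.mp hc).symm), mul_zero]

end Aux

/-- The Ã_{2k−1} M-algebra has a representation on `V = ℂ^k`: with `w_i` the standard
basis, `v_i = w_i − t w_{i−1}` (indices mod k, `t^k ≠ 1`), `e_i` the projection onto
`ℂv_i` along the other `v_j`, `f_i` the projection onto `ℂw_i` along the other `w_j`,
all defining relations hold. -/
theorem stmt13 (k : ℕ) [NeZero k] (hk : 2 ≤ k) (t : ℂ) (ht : t ^ k ≠ 1) :
    ∀ w v : ZMod k → (ZMod k → ℂ),
      (∀ i, w i = Pi.single i 1) →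
      (∀ i, v i = w i - t • w (i - 1)) →
      ∃ e f : ZMod k → ((ZMod k → ℂ) →ₗ[ℂ] (ZMod k → ℂ)),
        (∀ i j, e i (v j) = if i = j then v i else 0) ∧
        (∀ i j, f i (w j) = if i = j then w i else 0) ∧
        (∀ i j, (e i).comp (e j) = if i = j then e i else 0) ∧
        (∀ i j, (f i).comp (f j) = if i = j then f i else 0) ∧
        (∑ i, e i) = LinearMap.id ∧
        (∑ i, f i) = LinearMap.id ∧
        (∀ i j, j - i ≠ 0 → j - i ≠ 1 → (f i).comp (e j) = 0) := by
  intro w v hw hv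
  have hne : (1 : ℂ) - t ^ k ≠ 0 := sub_ne_zero.mpr (Ne.symm ht)
  have hv' : ∀ j, v j = vdef13 k t j := by
    intro j; rw [hv, hw, hw]; rfl
  refine ⟨e13 k t, f13 k, ?_, ?_, ?_, ?_, ?_, ?_, ?_⟩
  · -- e i (v j)
    intro i j
    rw [hv', hv', e13_apply, phi_v13 k t hk ht]
    by_cases h : i = j <;> simp [h]
  · -- f i (w j)
    intro i j
    rw [hw, hw, f13_apply]
    by_cases h : i = j
    · subst h; simp
    · simp [Pi.single_apply, h, Ne.symm h]
  · -- e i ∘ e j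
    intro i j
    apply LinearMap.ext; intro x
    rw [LinearMap.comp_apply, e13_apply k t j x, map_smul, e13_apply, phi_v13 k t hk ht]
    by_cases h : i = j
    · subst h
      rw [if_pos rfl, if_pos rfl, one_smul, e13_apply]
    · rw [if_neg h, if_neg h, zero_smul, smul_zero, LinearMap.zero_apply]
  · -- f i ∘ f j
    intro i j
    apply LinearMap.ext; intro x
    rw [LinearMap.comp_apply, f13_apply, f13_apply]
    by_cases h : i = j
    · subst h; rw [if_pos rfl, f13_apply]; simp
    · rw [if_neg h, LinearMap.zero_apply]
      simp [Pi.single_apply, h, Ne.symm h]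
  · -- sum e = id
    apply Module.Basis.ext (Pi.basisFun ℂ (ZMod k))
    intro j
    have hb : (Pi.basisFun ℂ (ZMod k)) j = (Pi.single j 1 : ZMod k → ℂ) := by
      simp [Pi.basisFun_apply]
    rw [hb, LinearMap.sum_apply]
    funext m
    rw [Finset.sum_apply]
    have heval : ∀ i : ZMod k, (e13 k t i (Pi.single j 1)) m
        = (1 - t ^ k)⁻¹ * (t ^ (j - i).val * (vdef13 k t i m)) := by
      intro i
      rw [e13_apply]
      have hphi : phi13 k t i (Pi.single j 1) = (1 - t ^ k)⁻¹ * t ^ (j - i).val := by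
        show (1 - t ^ k)⁻¹ * ∑ l, t ^ (l - i).val * ((Pi.single j 1 : ZMod k → ℂ) l) = _
        congr 1
        rw [Finset.sum_eq_single j]
        · simp
        · intro l _ hl; simp [Pi.single_apply, hl]
        · simp
      rw [hphi]
      simp [mul_assoc]
    simp only [heval]
    rw [← Finset.mul_sum]
    have hsum : ∑ i, t ^ (j - i).val * (vdef13 k t i m)
        = t ^ (j - m).val - t * t ^ ((j - m) - 1).val := by
      simp only [vdef13, Pi.sub_apply, Pi.smul_apply, Pi.single_apply, smul_eq_mul, mul_sub]
      rw [Finset.sum_sub_distrib]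
      congr 1
      · rw [Finset.sum_eq_single m]
        · simp
        · intro i _ hi; simp [Ne.symm hi]
        · simp
      · rw [Finset.sum_eq_single (m + 1)]
        · simp [show (m + 1 - 1 : ZMod k) = m by ring,
            show (j - (m + 1) : ZMod k) = (j - m) - 1 by ring]
          ring
        · intro i _ hi
          have hne' : m ≠ i - 1 := fun hc => hi (by rw [hc]; ring)
          simp [hne']
        · simp
    rw [hsum, key13 k t hk (j - m)]
    by_cases h : j = m
    · rw [if_pos (by rw [h]; ring)]
      simp [Pi.single_apply, h, hne]
    · rw [if_neg (fun hc => h (sub_eq_zero.mp hc))]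
      simp [Pi.single_apply, Ne.symm h]
  · -- sum f = id
    apply LinearMap.ext; intro x
    rw [LinearMap.sum_apply, LinearMap.id_apply]
    simp only [f13_apply]
    exact Finset.univ_sum_single x
  · -- f i ∘ e j = 0
    intro i j h0 h1
    apply LinearMap.ext; intro x
    rw [LinearMap.comp_apply, e13_apply, f13_apply]
    have hij : i ≠ j := fun hc => h0 (by rw [hc]; ring)
    have hij1 : i ≠ j - 1 := fun hc => h1 (by rw [hc]; ring)
    have hz : vdef13 k t j i = 0 := by
      simp [vdef13, Pi.single_apply, Ne.symm hij, Ne.symm hij1]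
    simp [hz]
end

section
/- In the setting of the representation of the Ã_{2k−1} M-algebra on V = ℂ^k (with bases w_i and v_i = w_i − t w_{i−1}, e_i projection onto ℂv_i along the other v's, f_i projection onto ℂw_i along the other w's, t^k ≠ 1), define R(x) = Σ_{1 ≤ i ≤ j ≤ k−1} e_i x f_j + f_k e_k x for x ∈ End(V). Then the element K := R(1) = Σ_{1 ≤ i ≤ j ≤ k−1} e_i f_j + f_k e_k acts on V as scalar multiplication by 1/(1 − t^k). -/
open Finset

/-- In the Ã_{2k−1} representation on `ℂ^k`, the element
`K = Σ_{1 ≤ i ≤ j ≤ k−1} e_i f_j + f_k e_k` acts as the scalar `1/(1 − t^k)`. -/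
theorem stmt14 (k : ℕ) [NeZero k] (hk : 2 ≤ k) (t : ℂ) (ht : t ^ k ≠ 1)
    (w v : ZMod k → (ZMod k → ℂ))
    (hw : ∀ i, w i = Pi.single i 1)
    (hv : ∀ i, v i = w i - t • w (i - 1))
    (e f : ZMod k → ((ZMod k → ℂ) →ₗ[ℂ] (ZMod k → ℂ)))
    (he : ∀ i j, e i (v j) = if i = j then v i else 0)
    (hf : ∀ i j, f i (w j) = if i = j then w i else 0) :
    ((∑ i ∈ Finset.Icc 1 (k - 1), ∑ j ∈ Finset.Icc i (k - 1),
        (e (i : ZMod k)).comp (f (j : ZMod k)))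
      + (f (k : ZMod k)).comp (e (k : ZMod k)))
      = (1 - t ^ k)⁻¹ • LinearMap.id := by
  have hk0 : k ≠ 0 := NeZero.ne k
  have htk : (1 : ℂ) - t ^ k ≠ 0 := sub_ne_zero.mpr (Ne.symm ht)
  -- the inversion of the basis change
  have hvw : ∀ m : ZMod k,
      ∑ r ∈ Finset.range k, t ^ r • v (m - (r : ZMod k)) = (1 - t ^ k) • w m := by
    intro m
    have hterm : ∀ r ∈ Finset.range k, t ^ r • v (m - (r : ZMod k)) =
        (fun j : ℕ => t ^ j • w (m - (j : ZMod k))) r -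
        (fun j : ℕ => t ^ j • w (m - (j : ZMod k))) (r + 1) := by
      intro r _
      have h1 : m - (r : ZMod k) - 1 = m - ((r + 1 : ℕ) : ZMod k) := by
        push_cast; ring
      rw [hv, smul_sub, smul_smul, ← pow_succ, h1]
    rw [Finset.sum_congr rfl hterm, Finset.sum_range_sub']
    simp only [pow_zero, Nat.cast_zero, sub_zero, one_smul, ZMod.natCast_self]
    rw [sub_smul, one_smul]
  -- formula for e i applied to w m
  have hew : ∀ i m : ZMod k, e i (w m) = (1 - t ^ k)⁻¹ • (t ^ (m - i).val • v i) := by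
    intro i m
    rw [eq_inv_smul_iff₀ htk, ← map_smul, ← hvw m, map_sum]
    have hterm : ∀ r ∈ Finset.range k, e i (t ^ r • v (m - (r : ZMod k))) =
        if (m - i).val = r then t ^ r • v i else 0 := by
      intro r hr
      have hrk : r < k := Finset.mem_range.mp hr
      rw [map_smul, he]
      by_cases h : (m - i).val = r
      · rw [if_pos h, if_pos]
        have : ((m - i).val : ZMod k) = (r : ZMod k) := by rw [h]
        rw [ZMod.natCast_val, ZMod.cast_id] at this
        rw [← this]; ring
      · rw [if_neg h, if_neg, smul_zero]
        intro hc
        apply h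
        have : m - (m - (r : ZMod k)) = (r : ZMod k) := by ring
        rw [hc, this, ZMod.val_cast_of_lt hrk]
    rw [Finset.sum_congr rfl hterm, Finset.sum_ite_eq,
      if_pos (Finset.mem_range.mpr (ZMod.val_lt _))]
  -- now prove equality on the standard basis
  refine Module.Basis.ext (Pi.basisFun ℂ (ZMod k)) fun m => ?_
  have hb : (Pi.basisFun ℂ (ZMod k)) m = w m := by rw [hw, Pi.basisFun_apply]
  rw [hb]
  set M := m.val with hMdef
  have hMk : M < k := ZMod.val_lt m
  have hmM : ((M : ℕ) : ZMod k) = m := by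
    rw [hMdef, ZMod.natCast_val, ZMod.cast_id]
  simp only [LinearMap.add_apply, LinearMap.sum_apply, LinearMap.comp_apply,
    LinearMap.smul_apply, LinearMap.id_apply]
  -- collapse the inner sum
  have hinner : ∀ i ∈ Finset.Icc 1 (k - 1),
      ∑ j ∈ Finset.Icc i (k - 1), e (i : ZMod k) (f (j : ZMod k) (w m)) =
      if i ≤ M then e (i : ZMod k) (w m) else 0 := by
    intro i hi
    have h1 : ∀ j ∈ Finset.Icc i (k - 1), e (i : ZMod k) (f (j : ZMod k) (w m)) =
        if M = j then e (i : ZMod k) (w m) else 0 := by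
      intro j hj
      have hjk : j < k := by
        have := (Finset.mem_Icc.mp hj).2; omega
      by_cases h : M = j
      · have hjm : (j : ZMod k) = m := by rw [← h, hmM]
        rw [if_pos h, hf, if_pos hjm, hjm]
      · rw [if_neg h, hf, if_neg, map_zero]
        intro hc
        apply h
        have := congrArg ZMod.val hc
        rw [ZMod.val_cast_of_lt hjk] at this
        exact this.symm
    rw [Finset.sum_congr rfl h1, Finset.sum_ite_eq]
    congr 1
    rw [eq_iff_iff, Finset.mem_Icc]
    have := (Finset.mem_Icc.mp hi).1
    omega
  rw [Finset.sum_congr rfl hinner, ← Finset.sum_filter]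
  have hfil : (Finset.Icc 1 (k - 1)).filter (· ≤ M) = Finset.Icc 1 M := by
    ext a
    simp only [Finset.mem_filter, Finset.mem_Icc]
    omega
  rw [hfil]
  -- rewrite each term via hew
  have hterm2 : ∀ i ∈ Finset.Icc 1 M, e ((i : ℕ) : ZMod k) (w m) =
      (1 - t ^ k)⁻¹ • (t ^ (M - i) • v ((i : ℕ) : ZMod k)) := by
    intro i hi
    have hi' := Finset.mem_Icc.mp hi
    rw [hew]
    have h1 : m - ((i : ℕ) : ZMod k) = ((M - i : ℕ) : ZMod k) := by
      rw [Nat.cast_sub hi'.2, hmM]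
    rw [h1, ZMod.val_cast_of_lt (by omega : M - i < k)]
  rw [Finset.sum_congr rfl hterm2, ← Finset.smul_sum]
  -- telescope the sum
  have htel : ∑ i ∈ Finset.Icc 1 M, t ^ (M - i) • v ((i : ℕ) : ZMod k) =
      w m - t ^ M • w 0 := by
    have : Finset.Icc 1 M = Finset.Ico 1 (M + 1) := by
      rw [Finset.Ico_add_one_right_eq_Icc]
    rw [this, Finset.sum_Ico_eq_sum_range]
    simp only [Nat.add_sub_cancel]
    have hterm3 : ∀ r ∈ Finset.range M, t ^ (M - (1 + r)) • v (((1 + r : ℕ)) : ZMod k) =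
        (fun j : ℕ => t ^ (M - j) • w ((j : ℕ) : ZMod k)) (r + 1) -
        (fun j : ℕ => t ^ (M - j) • w ((j : ℕ) : ZMod k)) r := by
      intro r hr
      have hrM := Finset.mem_range.mp hr
      have h1 : ((1 + r : ℕ) : ZMod k) - 1 = ((r : ℕ) : ZMod k) := by
        push_cast; ring
      have h2 : M - (1 + r) + 1 = M - r := by omega
      simp only
      rw [hv, smul_sub, smul_smul, ← pow_succ, h1, h2]
      rw [show 1 + r = r + 1 from by omega]
    rw [Finset.sum_congr rfl hterm3,
      Finset.sum_range_sub (f := fun j : ℕ => t ^ (M - j) • w ((j : ℕ) : ZMod k))]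
    simp only [Nat.sub_self, pow_zero, one_smul, Nat.cast_zero, Nat.sub_zero, hmM]
  rw [htel]
  -- the second summand
  have hk' : ((k : ℕ) : ZMod k) = (0 : ZMod k) := ZMod.natCast_self k
  have hfv : f 0 (v 0) = w 0 := by
    haveI : Fact (1 < k) := ⟨by omega⟩
    rw [hv, map_sub, map_smul, hf, hf, if_pos rfl, if_neg, smul_zero, sub_zero]
    intro hc
    rw [zero_sub] at hc
    exact one_ne_zero (neg_eq_zero.mp hc.symm)
  have hsecond : f ((k : ℕ) : ZMod k) (e ((k : ℕ) : ZMod k) (w m)) =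
      (1 - t ^ k)⁻¹ • (t ^ M • w 0) := by
    rw [hk', hew, map_smul, map_smul, sub_zero, hfv]
  rw [hsecond, ← smul_add]
  congr 1
  abel
end

section
/- Fix k ≥ 2 and t ∈ ℂ with t^k ≠ 1, and consider the representation of the Ã_{2k−1} M-algebra on V = ℂ^k as above (e_i, f_i projections associated to the bases v_i = w_i − t w_{i−1} and w_i). Let R ∈ End(End(V)) be given by R(x) = Σ_{1 ≤ i ≤ j ≤ k−1} e_i x f_j + f_k e_k x, and let K = R(1), which acts as the scalar μ = 1/(1 − t^k). Then R satisfies the cubic identity μ R(x) − (μ + 1) R²(x) + R³(x) = 0 for all x ∈ End(V). -/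
open Finset

/-- The "triangular" part of the operator `R`. -/
noncomputable def Aop (k : ℕ) (e f : ZMod k → ((ZMod k → ℂ) →ₗ[ℂ] (ZMod k → ℂ)))
    (x : (ZMod k → ℂ) →ₗ[ℂ] (ZMod k → ℂ)) : (ZMod k → ℂ) →ₗ[ℂ] (ZMod k → ℂ) :=
  ∑ i ∈ Finset.Icc 1 (k - 1), ∑ j ∈ Finset.Icc i (k - 1),
    (e (i : ZMod k)).comp (x.comp (f (j : ZMod k)))

/-- In the Ã_{2k−1} representation on `ℂ^k`, the operator
`R(x) = Σ_{1 ≤ i ≤ j ≤ k−1} e_i x f_j + f_k e_k x` satisfies the cubic identity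
`μ R(x) − (μ+1) R²(x) + R³(x) = 0` with `μ = 1/(1 − t^k)`. -/
theorem stmt15 (k : ℕ) [NeZero k] (hk : 2 ≤ k) (t : ℂ) (ht : t ^ k ≠ 1)
    (w v : ZMod k → (ZMod k → ℂ))
    (hw : ∀ i, w i = Pi.single i 1)
    (hv : ∀ i, v i = w i - t • w (i - 1))
    (e f : ZMod k → ((ZMod k → ℂ) →ₗ[ℂ] (ZMod k → ℂ)))
    (he : ∀ i j, e i (v j) = if i = j then v i else 0)
    (hf : ∀ i j, f i (w j) = if i = j then w i else 0) :
    ∀ R : ((ZMod k → ℂ) →ₗ[ℂ] (ZMod k → ℂ)) → ((ZMod k → ℂ) →ₗ[ℂ] (ZMod k → ℂ)),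
      (∀ x, R x = (∑ i ∈ Finset.Icc 1 (k - 1), ∑ j ∈ Finset.Icc i (k - 1),
          (e (i : ZMod k)).comp (x.comp (f (j : ZMod k))))
        + ((f (k : ZMod k)).comp (e (k : ZMod k))).comp x) →
      ∀ x, (1 - t ^ k)⁻¹ • R x - ((1 - t ^ k)⁻¹ + 1) • R (R x) + R (R (R x)) = 0 := by
  intro R hR
  have hk1 : 1 < k := hk
  have hk0 : (0 : ℕ) < k := by omega
  have hcast : ∀ a b : ℕ, a < k → b < k → (((a : ℕ) : ZMod k) = ((b : ℕ) : ZMod k) ↔ a = b) := by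
    intro a b ha hb
    constructor
    · intro h
      have h2 := congrArg ZMod.val h
      rwa [ZMod.val_natCast_of_lt ha, ZMod.val_natCast_of_lt hb] at h2
    · rintro rfl; rfl
  have hs : (1 - t ^ k) ≠ 0 := sub_ne_zero.mpr (Ne.symm ht)
  -- telescoping expansion of w in terms of v
  have hwv : ∀ i : ZMod k, (1 - t ^ k) • w i = ∑ m ∈ range k, t ^ m • v (i - (m : ℕ)) := by
    intro i
    have h1 : ∀ m : ℕ, t ^ m • v (i - (m : ℕ)) =
        t ^ m • w (i - (m : ℕ)) - t ^ (m + 1) • w (i - ((m + 1 : ℕ) : ZMod k)) := by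
      intro m
      rw [hv, smul_sub, smul_smul, ← pow_succ]
      congr 2
      push_cast
      ring
    rw [Finset.sum_congr rfl fun m _ => h1 m,
      Finset.sum_range_sub' (fun m => t ^ m • w (i - (m : ℕ))) k]
    simp [ZMod.natCast_self, sub_smul]
  -- extensionality along the basis w
  have hextw : ∀ g h : (ZMod k → ℂ) →ₗ[ℂ] (ZMod k → ℂ),
      (∀ j, g (w j) = h (w j)) → g = h := by
    intro g h hgh
    apply (Pi.basisFun ℂ (ZMod k)).ext
    intro i
    simpa [hw, Pi.basisFun_apply] using hgh i
  -- extensionality along v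
  have hextv : ∀ g h : (ZMod k → ℂ) →ₗ[ℂ] (ZMod k → ℂ),
      (∀ j, g (v j) = h (v j)) → g = h := by
    intro g h hgh
    apply hextw
    intro j
    have h2 : g ((1 - t ^ k) • w j) = h ((1 - t ^ k) • w j) := by
      rw [hwv j, map_sum, map_sum]
      exact Finset.sum_congr rfl fun m _ => by rw [map_smul, map_smul, hgh]
    rw [map_smul, map_smul] at h2
    exact smul_right_injective _ hs h2
  -- projections compose
  have hee : ∀ a b : ZMod k, (e a).comp (e b) = if a = b then e a else 0 := by
    intro a b
    apply hextv
    intro j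
    simp only [LinearMap.comp_apply, he,
      apply_ite (fun (g : (ZMod k → ℂ) →ₗ[ℂ] (ZMod k → ℂ)) => g (v j)), LinearMap.zero_apply]
    by_cases h1 : a = b <;> by_cases h2 : b = j <;> simp [he, h1, h2] <;> grind
  have hff : ∀ a b : ZMod k, (f a).comp (f b) = if a = b then f a else 0 := by
    intro a b
    apply hextw
    intro j
    simp only [LinearMap.comp_apply, hf,
      apply_ite (fun (g : (ZMod k → ℂ) →ₗ[ℂ] (ZMod k → ℂ)) => g (w j)), LinearMap.zero_apply]
    by_cases h1 : a = b <;> by_cases h2 : b = j <;> simp [hf, h1, h2] <;> grind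
  have heev : ∀ (a b : ZMod k) z, e a (e b z) = if a = b then e a z else 0 := by
    intro a b z
    rw [← LinearMap.comp_apply, hee]
    by_cases h : a = b <;> simp [h]
  have hffv : ∀ (a b : ZMod k) z, f a (f b z) = if a = b then f a z else 0 := by
    intro a b z
    rw [← LinearMap.comp_apply, hff]
    by_cases h : a = b <;> simp [h]
  -- action of e 0 on w 0
  have he0w0 : e 0 (w 0) = (1 - t ^ k)⁻¹ • v 0 := by
    have h1 : (1 - t ^ k) • e 0 (w 0) = v 0 := by
      rw [← map_smul, hwv 0, map_sum]
      have hterm : ∀ m ∈ range k, e 0 (t ^ m • v (0 - (m : ℕ))) = if m = 0 then v 0 else 0 := by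
        intro m hm
        rw [map_smul, he]
        by_cases h : m = 0
        · subst h; simp
        · rw [if_neg, smul_zero, if_neg h]
          intro hcontra
          have h3 : ((m : ℕ) : ZMod k) = ((0 : ℕ) : ZMod k) := by
            push_cast
            linear_combination hcontra
          exact h ((hcast m 0 (mem_range.mp hm) hk0).mp h3)
      rw [Finset.sum_congr rfl hterm, Finset.sum_ite_eq' (range k) 0 fun _ => v 0]
      simp [mem_range, hk0]
    rw [← h1, inv_smul_smul₀ hs]
  have hne01 : (0 : ZMod k) ≠ 0 - 1 := by
    intro h
    have h2 : ((1 : ℕ) : ZMod k) = ((0 : ℕ) : ZMod k) := by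
      push_cast
      linear_combination h
    have := (hcast 1 0 hk1 hk0).mp h2
    omega
  have hfv0 : f 0 (v 0) = w 0 := by
    rw [hv, map_sub, map_smul, hf, hf, if_pos rfl, if_neg hne01, smul_zero, sub_zero]
  have hPv : ∀ j : ZMod k, f 0 (e 0 (v j)) = if j = 0 then w 0 else 0 := by
    intro j
    rw [he]
    by_cases h : j = 0
    · subst h; simp [hfv0]
    · rw [if_neg fun hh => h hh.symm, map_zero, if_neg h]
  -- P := f 0 ∘ e 0 satisfies P² = μ P
  have hPP : ((f (0 : ZMod k)).comp (e 0)).comp ((f (0 : ZMod k)).comp (e 0))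
      = (1 - t ^ k)⁻¹ • ((f (0 : ZMod k)).comp (e 0)) := by
    apply hextv
    intro j
    simp only [LinearMap.comp_apply, LinearMap.smul_apply]
    rw [hPv j]
    by_cases h : j = 0
    · subst h
      rw [if_pos rfl, he0w0, map_smul, hfv0]
    · rw [if_neg h, map_zero, map_zero, smul_zero]
  have hPe : ∀ a : ZMod k, a ≠ 0 → ((f (0 : ZMod k)).comp (e 0)).comp (e a) = 0 := by
    intro a ha
    apply hextv
    intro j
    simp only [LinearMap.comp_apply, LinearMap.zero_apply, he]
    by_cases h : a = j
    · rw [if_pos h, hPv, if_neg ha]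
    · rw [if_neg h, map_zero, map_zero]
  -- linearity of Aop
  have hAadd : ∀ x y, Aop k e f (x + y) = Aop k e f x + Aop k e f y := by
    intro x y
    simp only [Aop, LinearMap.add_comp, LinearMap.comp_add, Finset.sum_add_distrib]
  have hAsmul : ∀ (c : ℂ) x, Aop k e f (c • x) = c • Aop k e f x := by
    intro c x
    simp only [Aop, LinearMap.smul_comp, LinearMap.comp_smul, Finset.smul_sum]
  have hltI : ∀ a b : ℕ, a ∈ Icc b (k - 1) → a < k := by
    intro a b hab
    rw [mem_Icc] at hab
    omega
  have hcne : ∀ i ∈ Icc 1 (k - 1), ((i : ℕ) : ZMod k) ≠ 0 := by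
    intro i hi h
    have h2 : ((i : ℕ) : ZMod k) = ((0 : ℕ) : ZMod k) := by simpa using h
    have h3 := (hcast i 0 (hltI i 1 hi) hk0).mp h2
    rw [mem_Icc] at hi
    omega
  -- P ∘ A = 0
  have hPA : ∀ x, ((f (0 : ZMod k)).comp (e 0)).comp (Aop k e f x) = 0 := by
    intro x
    apply LinearMap.ext
    intro u
    simp only [Aop, LinearMap.comp_apply, LinearMap.sum_apply, LinearMap.zero_apply, map_sum]
    apply Finset.sum_eq_zero
    intro i hi
    apply Finset.sum_eq_zero
    intro j hj
    have h2 := LinearMap.ext_iff.mp (hPe (i : ZMod k) (hcne i hi)) (x (f (j : ZMod k) u))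
    simpa using h2
  -- A is idempotent
  have hAA : ∀ x, Aop k e f (Aop k e f x) = Aop k e f x := by
    intro x
    apply LinearMap.ext
    intro u
    simp only [Aop, LinearMap.comp_apply, LinearMap.sum_apply, map_sum]
    apply Finset.sum_congr rfl
    intro i hi
    apply Finset.sum_congr rfl
    intro j hj
    rw [Finset.sum_eq_single_of_mem i hi (fun i' hi' hne => Finset.sum_eq_zero fun j' hj' => by
        rw [heev, if_neg fun hc => hne ((hcast i' i (hltI i' 1 hi') (hltI i 1 hi)).mp hc.symm)]),
      Finset.sum_eq_single_of_mem j hj (fun j' hj' hne => by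
        rw [hffv, if_neg fun hc => hne ((hcast j' j (hltI j' i hj') (hltI j i hj)).mp hc)]
        simp)]
    simp [heev, hffv]
  -- rewrite R in terms of Aop and P
  have hR' : ∀ y, R y = Aop k e f y + ((f (0 : ZMod k)).comp (e 0)).comp y := by
    intro y
    rw [hR y, ZMod.natCast_self]
    rfl
  have hPB : ∀ y : (ZMod k → ℂ) →ₗ[ℂ] (ZMod k → ℂ),
      ((f (0 : ZMod k)).comp (e 0)).comp (((f (0 : ZMod k)).comp (e 0)).comp y)
      = (1 - t ^ k)⁻¹ • (((f (0 : ZMod k)).comp (e 0)).comp y :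
          (ZMod k → ℂ) →ₗ[ℂ] (ZMod k → ℂ)) := by
    intro y
    rw [← LinearMap.comp_assoc, hPP, LinearMap.smul_comp ((1 - t ^ k)⁻¹) ((f (0 : ZMod k)).comp (e 0)) y]
  intro x
  have h2 : R (R x) = Aop k e f x + Aop k e f (((f (0 : ZMod k)).comp (e 0)).comp x)
      + (1 - t ^ k)⁻¹ • (((f (0 : ZMod k)).comp (e 0)).comp x) := by
    rw [hR' x, hR', hAadd, hAA, LinearMap.comp_add, hPA, hPB]
    abel
  have h3 : R (R (R x)) = Aop k e f x + Aop k e f (((f (0 : ZMod k)).comp (e 0)).comp x)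
      + (1 - t ^ k)⁻¹ • Aop k e f (((f (0 : ZMod k)).comp (e 0)).comp x)
      + (1 - t ^ k)⁻¹ • ((1 - t ^ k)⁻¹ • (((f (0 : ZMod k)).comp (e 0)).comp x)) := by
    rw [h2, hR', hAadd, hAadd, hAA, hAA, hAsmul, LinearMap.comp_add, LinearMap.comp_add,
      hPA, hPA, LinearMap.comp_smul, hPB]
    abel
  rw [h3, h2, hR' x]
  module
end
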